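/- There exists a constant C > 0 such that for all ξ₁, ξ₂ ∈ ℝ³ and all τ₁, τ₂ ∈ ℝ with |ξ₁| ≥ 2|ξ₂|, one has ⟨ξ₁⟩² ≤ C ( ⟨τ₁ + |ξ₁|²⟩ + ⟨τ₂ + |ξ₂|²⟩ + ⟨(τ₁ − τ₂) + |ξ₁ − ξ₂|⟩ ). -/

import Mathlib

noncomputable section

open MeasureTheory Real Complex Filter

abbrev E3 : Type := EuclideanSpace ℝ (Fin 3)

/-- Spatial Fourier transform on ℝ³, convention `e^{-i x·ξ}`. -/
def ftx (f : E3 → ℂ) (ξ : E3) : ℂ :=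
  ∫ x : E3, Complex.exp (-Complex.I * ((inner ℝ x ξ : ℝ) : ℂ)) * f x

/-- Inverse spatial Fourier transform on ℝ³. -/
def iftx (f : E3 → ℂ) (x : E3) : ℂ :=
  (((2 * Real.pi) ^ 3 : ℝ) : ℂ)⁻¹ * ∫ ξ : E3, Complex.exp (Complex.I * ((inner ℝ x ξ : ℝ) : ℂ)) * f ξ

/-- Temporal Fourier transform, convention `e^{-i t τ}`. -/
def ftt (f : ℝ → ℂ) (τ : ℝ) : ℂ :=
  ∫ t : ℝ, Complex.exp (-Complex.I * ((t * τ : ℝ) : ℂ)) * f t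

/-- Inverse temporal Fourier transform. -/
def iftt (f : ℝ → ℂ) (t : ℝ) : ℂ :=
  ((2 * Real.pi : ℝ) : ℂ)⁻¹ * ∫ τ : ℝ, Complex.exp (Complex.I * ((t * τ : ℝ) : ℂ)) * f τ

/-- Space-time Fourier transform of `u(x,t)`, dual variables `(ξ,τ)`. -/
def ftxt (u : E3 → ℝ → ℂ) (ξ : E3) (τ : ℝ) : ℂ := ftt (fun t => ftx (fun x => u x t) ξ) τ

/-- Inverse space-time Fourier transform. -/
def iftxt (u : E3 → ℝ → ℂ) (x : E3) (t : ℝ) : ℂ := iftt (fun τ => iftx (fun ξ => u ξ τ) x) t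

/-- Japanese bracket of a real number. -/
def jpR (r : ℝ) : ℝ := Real.sqrt (1 + r ^ 2)

/-- Japanese bracket of a vector in ℝ³. -/
def jpV (ξ : E3) : ℝ := Real.sqrt (1 + ‖ξ‖ ^ 2)

/-- Sobolev `H^s` norm on ℝ³: `‖⟨ξ⟩^s f̂‖_{L²}`. -/
def sobNorm (s : ℝ) (f : E3 → ℂ) : ℝ :=
  (∫ ξ : E3, (1 + ‖ξ‖ ^ 2) ^ s * ‖ftx f ξ‖ ^ 2) ^ ((1 : ℝ) / 2)

/-- Sobolev `H^s` norm on ℝ (time variable). -/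
def sobNorm1 (s : ℝ) (f : ℝ → ℂ) : ℝ :=
  (∫ τ : ℝ, (1 + τ ^ 2) ^ s * ‖ftt f τ‖ ^ 2) ^ ((1 : ℝ) / 2)

/-- Schrödinger Bourgain norm `X_S^{s,b}`. -/
def XS (s b : ℝ) (u : E3 → ℝ → ℂ) : ℝ :=
  (∫ ξ : E3, ∫ τ : ℝ,
      (1 + ‖ξ‖ ^ 2) ^ s * (1 + (τ + ‖ξ‖ ^ 2) ^ 2) ^ b * ‖ftxt u ξ τ‖ ^ 2) ^ ((1 : ℝ) / 2)

/-- Wave Bourgain norm `X_W^{s,b}`. -/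
def XW (s b : ℝ) (u : E3 → ℝ → ℂ) : ℝ :=
  (∫ ξ : E3, ∫ τ : ℝ,
      (1 + ‖ξ‖ ^ 2) ^ s * (1 + (τ + ‖ξ‖) ^ 2) ^ b * ‖ftxt u ξ τ‖ ^ 2) ^ ((1 : ℝ) / 2)

/-- `L²(ℝ³×ℝ)` norm. -/
def L2norm (u : E3 → ℝ → ℂ) : ℝ := (∫ x : E3, ∫ t : ℝ, ‖u x t‖ ^ 2) ^ ((1 : ℝ) / 2)

/-- The free Schrödinger group `U(t) = e^{itΔ}`, Fourier multiplier `e^{-it|ξ|²}`. -/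
def Uop (t : ℝ) (f : E3 → ℂ) : E3 → ℂ :=
  iftx (fun ξ => Complex.exp (-Complex.I * ((t * ‖ξ‖ ^ 2 : ℝ) : ℂ)) * ftx f ξ)

/-- The reduced wave group `W(t) = e^{-it⟨∇⟩}`, Fourier multiplier `e^{-it⟨ξ⟩}`. -/
def Wop (t : ℝ) (f : E3 → ℂ) : E3 → ℂ :=
  iftx (fun ξ => Complex.exp (-Complex.I * ((t * Real.sqrt (1 + ‖ξ‖ ^ 2) : ℝ) : ℂ)) * ftx f ξ)

/-- `⟨∇⟩^{-1}`: Fourier multiplier with symbol `⟨ξ⟩⁻¹`. -/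
def bracketInv (f : E3 → ℂ) : E3 → ℂ :=
  iftx (fun ξ => (((Real.sqrt (1 + ‖ξ‖ ^ 2))⁻¹ : ℝ) : ℂ) * ftx f ξ)

/-- `⟨∇⟩`: Fourier multiplier with symbol `⟨ξ⟩`. -/
def bracketOp (f : E3 → ℂ) : E3 → ℂ :=
  iftx (fun ξ => ((Real.sqrt (1 + ‖ξ‖ ^ 2) : ℝ) : ℂ) * ftx f ξ)

/-- The Laplacian on ℝ³ (sum of second partial derivatives). -/
def laplacian {F : Type*} [NormedAddCommGroup F] [NormedSpace ℝ F] (f : E3 → F) (x : E3) : F :=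
  ∑ i : Fin 3,
    fderiv ℝ (fun y => fderiv ℝ f y (EuclideanSpace.single i (1 : ℝ))) x
      (EuclideanSpace.single i (1 : ℝ))

lemma jpR_ge_one' (r : ℝ) : 1 ≤ jpR r := by
  unfold jpR
  nlinarith [Real.sq_sqrt (show (0:ℝ) ≤ 1 + r^2 by positivity),
    Real.sqrt_nonneg (1 + r^2), sq_nonneg r]

lemma jpR_ge_abs' (r : ℝ) : |r| ≤ jpR r := by
  rw [jpR, show |r| = Real.sqrt (r^2) by rw [Real.sqrt_sq_eq_abs]]
  exact Real.sqrt_le_sqrt (by nlinarith)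

lemma arith_key' (x y z τ₁ τ₂ A B C : ℝ) (hx0 : 0 ≤ x) (hy0 : 0 ≤ y) (hz0 : 0 ≤ z)
    (hyx : 2 * y ≤ x) (hz : z ≤ x + y)
    (hA1 : 1 ≤ A) (hB1 : 1 ≤ B) (hC1 : 1 ≤ C)
    (hA : τ₁ + x ^ 2 ≤ A) (hB : -(τ₂ + y ^ 2) ≤ B) (hC : -((τ₁ - τ₂) + z) ≤ C) :
    1 + x ^ 2 ≤ 10 * (A + B + C) := by
  have hk : (3/4 : ℝ) * x ^ 2 - (3/2) * x ≤ A + B + C := by nlinarith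
  rcases le_or_gt x 3 with hx3 | hx3
  · nlinarith
  · nlinarith [sq_nonneg (x - 3)]

/-- `⟨ξ₁⟩² ≲ ⟨τ₁+|ξ₁|²⟩ + ⟨τ₂+|ξ₂|²⟩ + ⟨(τ₁−τ₂)+|ξ₁−ξ₂|⟩` when `|ξ₁| ≥ 2|ξ₂|`. -/
theorem bracket_sq_le_sum_of_modulations :
    ∃ C : ℝ, 0 < C ∧
      ∀ (ξ₁ ξ₂ : E3) (τ₁ τ₂ : ℝ), ‖ξ₁‖ ≥ 2 * ‖ξ₂‖ →
        jpV ξ₁ ^ 2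
          ≤ C * (jpR (τ₁ + ‖ξ₁‖ ^ 2) + jpR (τ₂ + ‖ξ₂‖ ^ 2) + jpR ((τ₁ - τ₂) + ‖ξ₁ - ξ₂‖)) := by
  refine ⟨10, by norm_num, fun ξ₁ ξ₂ τ₁ τ₂ h => ?_⟩
  have hjp : jpV ξ₁ ^ 2 = 1 + ‖ξ₁‖ ^ 2 := Real.sq_sqrt (by positivity)
  rw [hjp]
  exact arith_key' ‖ξ₁‖ ‖ξ₂‖ ‖ξ₁ - ξ₂‖ τ₁ τ₂ _ _ _ (norm_nonneg _) (norm_nonneg _)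
    (norm_nonneg _) h (norm_sub_le _ _) (jpR_ge_one' _) (jpR_ge_one' _) (jpR_ge_one' _)
    (le_trans (le_abs_self _) (jpR_ge_abs' _))
    (le_trans (neg_le_abs _) (jpR_ge_abs' _))
    (le_trans (neg_le_abs _) (jpR_ge_abs' _))
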